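/- For every parameter vector θ of the original network, every h ∈ {1,…,H_ℓ̂}, every λ_0,…,λ_K ∈ ℝ with Σ_{i=0}^K λ_i = 1, and every input x ∈ ℝ^n, the enlarged network obtained by the γ embedding computes exactly the same input–output map: f̂_r(x, γ_λ(θ)) = f_r(x, θ) for all r = 1,…,m. -/

import Mathlib

/-- Parameters of a fully connected feedforward network: `w ℓ j i` is the weight from
unit `i` of layer `ℓ-1` to unit `j` of layer `ℓ`, and `b ℓ j` is the bias of unit `j`
of layer `ℓ`.  Layers are numbered `1, …, L` (layer `0` is the input); units within a
layer are numbered from `0`, so layer `ℓ` consists of the units `0, …, H ℓ - 1`. -/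
structure NNParams where
  w : ℕ → ℕ → ℕ → ℝ
  b : ℕ → ℕ → ℝ

/-- `layerOut g H θ x ℓ i` : the output of unit `i` of layer `ℓ` on input `x`
(`layerOut g H θ x 0 = x`, and for `ℓ ≥ 1` it is `g` applied to the pre-activation). -/
noncomputable def layerOut (g : ℝ → ℝ) (H : ℕ → ℕ) (θ : NNParams) (x : ℕ → ℝ) :
    ℕ → ℕ → ℝ
  | 0, i => x i
  | ℓ + 1, i =>
      g (∑ j ∈ Finset.range (H ℓ), θ.w (ℓ + 1) i j * layerOut g H θ x ℓ j + θ.b (ℓ + 1) i)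

/-- Pre-activation `a_j^ℓ(x, θ)` of unit `j` of layer `ℓ ≥ 1`:
`a_j^ℓ = ∑_{i < H (ℓ-1)} w_{ji}^ℓ · (output of unit i of layer ℓ-1) + σ_j^ℓ`.
The outputs of the last layer `L` are `f_r(x,θ) = preact g H θ x L r` (linear output units). -/
noncomputable def preact (g : ℝ → ℝ) (H : ℕ → ℕ) (θ : NNParams) (x : ℕ → ℝ)
    (ℓ j : ℕ) : ℝ :=
  ∑ i ∈ Finset.range (H (ℓ - 1)), θ.w ℓ j i * layerOut g H θ x (ℓ - 1) i + θ.b ℓ j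

/-- Empirical risk `R_emp(θ) = (1/P) ∑_{p<P} ℒ(y^p, f(x^p, θ))`, where the network has
`L` layers with layer sizes given by `H`, the training inputs are `X p` and the labels
`Y p`, and `m` is the output dimension seen by the loss. -/
noncomputable def Remp (g : ℝ → ℝ) (H : ℕ → ℕ) (L P : ℕ) {m : ℕ}
    (X Y : ℕ → ℕ → ℝ) (loss : (ℕ → ℝ) → (Fin m → ℝ) → ℝ) (θ : NNParams) : ℝ :=
  (1 / (P : ℝ)) * ∑ p ∈ Finset.range P,
    loss (Y p) (fun r => preact g H θ (X p) L r)

/-- Layer sizes of the network enlarged by adding `K` new neurons to layer `l`. -/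
def enlargeH (H : ℕ → ℕ) (l K : ℕ) : ℕ → ℕ :=
  fun ℓ => if ℓ = l then H l + K else H ℓ

/-- The embedding `α_{ζv}` : copy all parameters, give the `k`-th new neuron of layer `l`
(`k = 0, …, K-1`, i.e. unit `H l + k`) the bias `ζ k` and incoming weights `v k`, and
set all weights from the new neurons to layer `l+1` to zero. -/
noncomputable def alphaEmb (H : ℕ → ℕ) (l K : ℕ) (ζ : ℕ → ℝ) (v : ℕ → ℕ → ℝ)
    (θ : NNParams) : NNParams where
  w := fun ℓ j i =>
    if ℓ = l ∧ H l ≤ j then v (j - H l) i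
    else if ℓ = l + 1 ∧ H l ≤ i then 0
    else θ.w ℓ j i
  b := fun ℓ j => if ℓ = l ∧ H l ≤ j then ζ (j - H l) else θ.b ℓ j

/-- The embedding `β_{ζs}` : copy all parameters except the biases of layer `l+1`, give
the `k`-th new neuron of layer `l` the bias `ζ k` and zero incoming weights, set the
outgoing weight from the `k`-th new neuron to unit `j` of layer `l+1` to `s j k`, and
replace the bias of unit `j` of layer `l+1` by `σ_j - ∑_{k<K} s j k · g (ζ k)`. -/
noncomputable def betaEmb (g : ℝ → ℝ) (H : ℕ → ℕ) (l K : ℕ) (ζ : ℕ → ℝ)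
    (s : ℕ → ℕ → ℝ) (θ : NNParams) : NNParams where
  w := fun ℓ j i =>
    if ℓ = l ∧ H l ≤ j then 0
    else if ℓ = l + 1 ∧ H l ≤ i then s j (i - H l)
    else θ.w ℓ j i
  b := fun ℓ j =>
    if ℓ = l ∧ H l ≤ j then ζ (j - H l)
    else if ℓ = l + 1 then θ.b (l + 1) j - ∑ k ∈ Finset.range K, s j k * g (ζ k)
    else θ.b ℓ j

/-- The embedding `γ_λ` : duplicate unit `h` of layer `l` into each of the `K` new
neurons (same bias and incoming weights as unit `h`), and split the outgoing weights:
unit `h` keeps `lam 0 · w_{jh}^{l+1}` and the `k`-th new neuron (`k = 0, …, K-1`,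
i.e. unit `H l + k`, corresponding to `λ_{k+1}` of the paper) gets
`lam (k+1) · w_{jh}^{l+1}`; all other parameters are copied. -/
noncomputable def gammaEmb (H : ℕ → ℕ) (l K : ℕ) (h : ℕ) (lam : ℕ → ℝ)
    (θ : NNParams) : NNParams where
  w := fun ℓ j i =>
    if ℓ = l ∧ H l ≤ j then θ.w l h i
    else if ℓ = l + 1 ∧ i = h then lam 0 * θ.w (l + 1) j h
    else if ℓ = l + 1 ∧ H l ≤ i then lam (i - H l + 1) * θ.w (l + 1) j h
    else θ.w ℓ j i
  b := fun ℓ j => if ℓ = l ∧ H l ≤ j then θ.b l h else θ.b ℓ j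

/-- `θ` with the single weight `w ℓ j i` replaced by `t`. -/
noncomputable def updW (θ : NNParams) (ℓ j i : ℕ) (t : ℝ) : NNParams :=
  ⟨fun ℓ' j' i' => if ℓ' = ℓ ∧ j' = j ∧ i' = i then t else θ.w ℓ' j' i', θ.b⟩

/-- `θ` with the single bias `b ℓ j` replaced by `t`. -/
noncomputable def updB (θ : NNParams) (ℓ j : ℕ) (t : ℝ) : NNParams :=
  ⟨θ.w, fun ℓ' j' => if ℓ' = ℓ ∧ j' = j then t else θ.b ℓ' j'⟩

/-- `∇ R_emp(θ) = 0` : every partial derivative of the empirical risk with respect to an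
actual network parameter (a weight `w ℓ j i` or a bias `b ℓ j`, `1 ≤ ℓ ≤ L`, `j < H ℓ`,
`i < H (ℓ-1)`) vanishes at `θ`. -/
def IsCritical (g : ℝ → ℝ) (H : ℕ → ℕ) (L P : ℕ) {m : ℕ}
    (X Y : ℕ → ℕ → ℝ) (loss : (ℕ → ℝ) → (Fin m → ℝ) → ℝ) (θ : NNParams) : Prop :=
  (∀ ℓ j i, 1 ≤ ℓ → ℓ ≤ L → j < H ℓ → i < H (ℓ - 1) →
      deriv (fun t => Remp g H L P X Y loss (updW θ ℓ j i t)) (θ.w ℓ j i) = 0) ∧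
  ∀ ℓ j, 1 ≤ ℓ → ℓ ≤ L → j < H ℓ →
      deriv (fun t => Remp g H L P X Y loss (updB θ ℓ j t)) (θ.b ℓ j) = 0

/-- Layer sizes after enlarging layer `p.1` by `p.2` neurons for each pair in the list. -/
def multiEnlargeH : (ℕ → ℕ) → List (ℕ × ℕ) → (ℕ → ℕ)
  | H, [] => H
  | H, (l, K) :: rest => multiEnlargeH (enlargeH H l K) rest

/-- Composition of `α` embeddings: for each `(l, K)` in the list (in order), add `K` new
neurons to layer `l` via `α` with biases `ζ l` and incoming weights `v l`. -/
noncomputable def multiAlpha (ζ : ℕ → ℕ → ℝ) (v : ℕ → ℕ → ℕ → ℝ) :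
    (ℕ → ℕ) → List (ℕ × ℕ) → NNParams → NNParams
  | _, [], θ => θ
  | H, (l, K) :: rest, θ =>
      multiAlpha ζ v (enlargeH H l K) rest (alphaEmb H l K (ζ l) (v l) θ)

noncomputable def multiBeta (g : ℝ → ℝ) (ζ : ℕ → ℕ → ℝ) (s : ℕ → ℕ → ℕ → ℝ) :
    (ℕ → ℕ) → List (ℕ × ℕ) → NNParams → NNParams
  | _, [], θ => θ
  | H, (l, K) :: rest, θ =>
      multiBeta g ζ s (enlargeH H l K) rest (betaEmb g H l K (ζ l) (s l) θ)

noncomputable def multiGamma (hsel : ℕ → ℕ) (lam : ℕ → ℕ → ℝ) :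
    (ℕ → ℕ) → List (ℕ × ℕ) → NNParams → NNParams
  | _, [], θ => θ
  | H, (l, K) :: rest, θ =>
      multiGamma hsel lam (enlargeH H l K) rest (gammaEmb H l K (hsel l) (lam l) θ)

/-- A single enlargement step: either a `β` embedding with zero outgoing weights, or a
`γ` embedding. -/
inductive EmbStep where
  | beta (l K : ℕ) (ζ : ℕ → ℝ)
  | gamma (l K : ℕ) (h : ℕ) (lam : ℕ → ℝ)

def EmbStep.layer : EmbStep → ℕ
  | .beta l _ _ => l
  | .gamma l _ _ _ => l

def EmbStep.count : EmbStep → ℕ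
  | .beta _ K _ => K
  | .gamma _ K _ _ => K

noncomputable def EmbStep.apply (g : ℝ → ℝ) (H : ℕ → ℕ) (θ : NNParams) : EmbStep → NNParams
  | .beta l K ζ => betaEmb g H l K ζ (fun _ _ => 0) θ
  | .gamma l K h lam => gammaEmb H l K h lam θ

def EmbStep.OK (H : ℕ → ℕ) (L : ℕ) : EmbStep → Prop
  | .beta l _ _ => 1 ≤ l ∧ l + 1 ≤ L
  | .gamma l K h lam => 1 ≤ l ∧ l + 1 ≤ L ∧ h < H l ∧ ∑ i ∈ Finset.range (K + 1), lam i = 1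

noncomputable def applySteps (g : ℝ → ℝ) : (ℕ → ℕ) → List EmbStep → NNParams → NNParams
  | _, [], θ => θ
  | H, st :: rest, θ =>
      applySteps g (enlargeH H st.layer st.count) rest (EmbStep.apply g H θ st)

def stepsH : (ℕ → ℕ) → List EmbStep → (ℕ → ℕ)
  | H, [] => H
  | H, st :: rest => stepsH (enlargeH H st.layer st.count) rest

/-- For every parameter vector `θ`, every unit `h < H l`, coefficients
`λ_0, …, λ_K` summing to one, and every input `x`, the network enlarged by the `γ`
embedding computes exactly the same input–output map:
`f̂_r(x, γ_λ(θ)) = f_r(x, θ)` for all outputs `r < m = H L`. -/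
theorem gammaEmb_preserves_output
    (g : ℝ → ℝ) (H : ℕ → ℕ) (L : ℕ)
    (l : ℕ) (hl1 : 1 ≤ l) (hlL : l + 1 ≤ L) (K : ℕ)
    (h : ℕ) (hh : h < H l) (lam : ℕ → ℝ)
    (hlam : ∑ i ∈ Finset.range (K + 1), lam i = 1)
    (θ : NNParams) (x : ℕ → ℝ) :
    ∀ r, r < H L →
      preact g (enlargeH H l K) (gammaEmb H l K h lam θ) x L r = preact g H θ x L r :=  by
  have hne : l + 1 ≠ l := by omega
  set H' := enlargeH H l K with hH'
  set θ' := gammaEmb H l K h lam θ with hθ'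
  -- layers strictly below l, and layer l for old units: outputs unchanged
  have low1 : ∀ ℓ, ℓ ≤ l → ∀ i, i < H ℓ →
      layerOut g H' θ' x ℓ i = layerOut g H θ x ℓ i := by
    intro ℓ
    induction ℓ with
    | zero => intro _ i _; simp [layerOut]
    | succ n ih =>
      intro hle i hi
      have hn : n < l := lt_of_lt_of_le (Nat.lt_succ_self n) hle
      have hHn : H' n = H n := by simp [hH', enlargeH, Nat.ne_of_lt hn]
      have hw : ∀ j, θ'.w (n + 1) i j = θ.w (n + 1) i j := by
        intro j
        have h1 : ¬(n + 1 = l ∧ H l ≤ i) := by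
          rintro ⟨rfl, hle'⟩; omega
        have h2 : n + 1 ≠ l + 1 := by omega
        simp [hθ', gammaEmb, h1, h2, Nat.ne_of_lt hn]
      have hb : θ'.b (n + 1) i = θ.b (n + 1) i := by
        have h1 : ¬(n + 1 = l ∧ H l ≤ i) := by
          rintro ⟨rfl, hle'⟩; omega
        simp [hθ', gammaEmb, h1]
      simp only [layerOut, hHn, hb]
      congr 2
      refine Finset.sum_congr rfl fun j hj => ?_
      rw [hw j, ih (le_of_lt hn) j (Finset.mem_range.mp hj)]
  -- new units of layer l behave like unit h
  have low2 : ∀ i, H l ≤ i → layerOut g H' θ' x l i = layerOut g H θ x l h := by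
    intro i hi
    obtain ⟨m, rfl⟩ : ∃ m, l = m + 1 := ⟨l - 1, by omega⟩
    have hHm : H' m = H m := by simp [hH', enlargeH, Nat.ne_of_lt (Nat.lt_succ_self m)]
    have hw : ∀ j, θ'.w (m + 1) i j = θ.w (m + 1) h j := by
      intro j; simp [hθ', gammaEmb, hi]
    have hb : θ'.b (m + 1) i = θ.b (m + 1) h := by
      simp [hθ', gammaEmb, hi]
    simp only [layerOut, hHm, hb]
    congr 2
    refine Finset.sum_congr rfl fun j hj => ?_
    rw [hw j, low1 m (Nat.le_of_lt (Nat.lt_succ_self m)) j (Finset.mem_range.mp hj)]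
  -- the key computation at layer l+1
  have midsum : ∀ j,
      (∑ i ∈ Finset.range (H' l), θ'.w (l + 1) j i * layerOut g H' θ' x l i)
        + θ'.b (l + 1) j
      = (∑ i ∈ Finset.range (H l), θ.w (l + 1) j i * layerOut g H θ x l i)
        + θ.b (l + 1) j := by
    intro j
    set c : ℝ := θ.w (l + 1) j h * layerOut g H θ x l h with hc
    have hHl : H' l = H l + K := by simp [hH', enlargeH]
    have hb : θ'.b (l + 1) j = θ.b (l + 1) j := by
      simp [hθ', gammaEmb, hne]
    rw [hHl, hb, Finset.sum_range_add]
    have hpart1 : ∑ i ∈ Finset.range (H l), θ'.w (l + 1) j i * layerOut g H' θ' x l i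
        = ∑ i ∈ Finset.range (H l),
            (θ.w (l + 1) j i * layerOut g H θ x l i + if i = h then (lam 0 - 1) * c else 0) := by
      refine Finset.sum_congr rfl fun i hi => ?_
      have hi' : i < H l := Finset.mem_range.mp hi
      rw [low1 l le_rfl i hi']
      by_cases hih : i = h
      · subst hih
        have hw : θ'.w (l + 1) j i = lam 0 * θ.w (l + 1) j i := by
          simp [hθ', gammaEmb, hne]
        rw [hw]; simp [hc]; ring
      · have hw : θ'.w (l + 1) j i = θ.w (l + 1) j i := by
          have h3 : ¬ (H l ≤ i) := by omega
          simp [hθ', gammaEmb, hne, hih, h3]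
        rw [hw]; simp [hih]
    have hpart2 : ∑ i ∈ Finset.range K, θ'.w (l + 1) j (H l + i) * layerOut g H' θ' x l (H l + i)
        = ∑ i ∈ Finset.range K, lam (i + 1) * c := by
      refine Finset.sum_congr rfl fun i _ => ?_
      have hih : H l + i ≠ h := by omega
      have hw : θ'.w (l + 1) j (H l + i) = lam (H l + i - H l + 1) * θ.w (l + 1) j h := by
        simp [hθ', gammaEmb, hne, hih]
      rw [hw, low2 (H l + i) (Nat.le_add_right _ _), Nat.add_sub_cancel_left, hc]
      ring
    rw [hpart1, hpart2, Finset.sum_add_distrib]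
    have hmem : h ∈ Finset.range (H l) := Finset.mem_range.mpr hh
    rw [Finset.sum_ite_eq' (Finset.range (H l)) h (fun _ => (lam 0 - 1) * c), if_pos hmem]
    have hsum2 : ∑ i ∈ Finset.range K, lam (i + 1) * c = (1 - lam 0) * c := by
      rw [← Finset.sum_mul]
      have := Finset.sum_range_succ' lam K
      rw [hlam] at this
      have : ∑ k ∈ Finset.range K, lam (k + 1) = 1 - lam 0 := by linarith
      rw [this]
    rw [hsum2]; ring
  -- layers above l: outputs unchanged
  have high : ∀ d i, layerOut g H' θ' x (l + 1 + d) i = layerOut g H θ x (l + 1 + d) i := by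
    intro d
    induction d with
    | zero =>
      intro i
      show layerOut g H' θ' x (l + 1) i = layerOut g H θ x (l + 1) i
      simp only [layerOut]
      rw [midsum i]
    | succ n ih =>
      intro i
      have hL : l + 1 + (n + 1) = (l + 1 + n) + 1 := rfl
      rw [hL]
      have hHn : H' (l + 1 + n) = H (l + 1 + n) := by
        simp [hH', enlargeH, show l + 1 + n ≠ l by omega]
      have hw : ∀ j, θ'.w (l + 1 + n + 1) i j = θ.w (l + 1 + n + 1) i j := by
        intro j
        simp [hθ', gammaEmb, show l + 1 + n + 1 ≠ l by omega,
          show l + 1 + n + 1 ≠ l + 1 by omega, show l + 1 + n ≠ l by omega]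
      have hb : θ'.b (l + 1 + n + 1) i = θ.b (l + 1 + n + 1) i := by
        simp [hθ', gammaEmb, show l + 1 + n + 1 ≠ l by omega]
      simp only [layerOut, hHn, hb]
      congr 2
      refine Finset.sum_congr rfl fun j hj => ?_
      rw [hw j, ih j]
  intro r _
  rcases eq_or_lt_of_le hlL with hL | hL
  · -- L = l + 1
    subst hL
    simp only [preact, Nat.add_sub_cancel]
    exact midsum r
  · -- L ≥ l + 2
    obtain ⟨d, hd⟩ : ∃ d, L - 1 = l + 1 + d := ⟨L - 1 - (l + 1), by omega⟩
    have hHL : H' (L - 1) = H (L - 1) := by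
      simp [hH', enlargeH, show L - 1 ≠ l by omega]
    have hw : ∀ i, θ'.w L r i = θ.w L r i := by
      intro i
      simp [hθ', gammaEmb, show L ≠ l by omega, show L ≠ l + 1 by omega]
    have hb : θ'.b L r = θ.b L r := by
      simp [hθ', gammaEmb, show L ≠ l by omega]
    simp only [preact, hHL, hb]
    congr 1
    refine Finset.sum_congr rfl fun i _ => ?_
    rw [hw i, hd, high d i]
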